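/- Let a, b be coprime positive integers and n a positive integer, and let P ∈ {N,E}^{(a+b)n} be the word of an (a,b)-Dyck path of size n. Let P̃ ∈ {N,E}^{2abn} be the (a,b)-enlarged path obtained from P by replacing every letter N by b consecutive N's and every letter E by a consecutive E's. For r ∈ {a, b} and 1 ≤ i ≤ r, let P̃^{(r)}_i be the subword of P̃ consisting of the letters in positions congruent to i modulo r (positions i, r+i, 2r+i, …). Then: (a) for each 1 ≤ i ≤ b, P̃^{(b)}_i is a (1,1)-Dyck word of size an whose height sequence is 𝔥_i, the i-th height sequence of the horizontal strip-decomposition δ(P); (b) for each 1 ≤ i ≤ a, P̃^{(a)}_i is a (1,1)-Dyck word of size bn whose step sequence is ū_i, the i-th step sequence of the vertical strip-decomposition θ(P). -/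

import Mathlib

/-- the (0-based) index of the `k`-th (1-based) `true` (north step `N`) in `w`. -/
def kthTrueIdx (w : List Bool) (k : ℕ) : ℕ :=
  ((List.range w.length).filter (fun p => w.getD p false = true)).getD (k - 1) 0

/-- the (0-based) index of the `k`-th (1-based) `false` (east step `E`) in `w`. -/
def kthFalseIdx (w : List Bool) (k : ℕ) : ℕ :=
  ((List.range w.length).filter (fun p => w.getD p true = false)).getD (k - 1) 0

/-- `stepVal w k` : number of `E`'s (`false`) preceding the `k`-th `N` (`true`),
the `k`-th entry of the step sequence of the word `w`. -/
def stepVal (w : List Bool) (k : ℕ) : ℕ :=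
  (w.take (kthTrueIdx w k)).count false

/-- `heightVal w k` : number of `N`'s (`true`) preceding the `k`-th `E`
(`false`), the `k`-th entry of the height sequence of the word `w`. -/
def heightVal (w : List Bool) (k : ℕ) : ℕ :=
  (w.take (kthFalseIdx w k)).count true

/-- the (a,b)-enlarged path: every `N` (`true`) is replaced by `b` consecutive
`N`'s and every `E` (`false`) by `a` consecutive `E`'s. -/
def enlarge (a b : ℕ) (w : List Bool) : List Bool :=
  w.flatMap (fun c => if c then List.replicate b true else List.replicate a false)

/-- `subword r i w` : the subword of `w` consisting of the letters in
(1-based) positions `i, r+i, 2r+i, …` (congruent to `i` modulo `r`). -/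
def subword (r i : ℕ) (w : List Bool) : List Bool :=
  ((List.range w.length).filter (fun p => p % r = i - 1)).map (fun p => w.getD p false)


def pos (d : Bool) (w : List Bool) : List ℕ :=
  (List.range w.length).filter (fun p => w.getD p d = !d)

def kIdx (d : Bool) (w : List Bool) (k : ℕ) : ℕ := (pos d w).getD (k-1) 0

lemma kthFalseIdx_eq (w : List Bool) (k : ℕ) : kthFalseIdx w k = kIdx true w k := rfl
lemma kthTrueIdx_eq (w : List Bool) (k : ℕ) : kthTrueIdx w k = kIdx false w k := rfl

lemma pos_append (d : Bool) (w v : List Bool) :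
    pos d (w ++ v) = pos d w ++ (pos d v).map (w.length + ·) := by
  unfold pos
  rw [List.length_append, List.range_add, List.filter_append, List.filter_map]
  congr 1
  · apply List.filter_congr
    intro x hx
    rw [List.mem_range] at hx
    rw [List.getD_append _ _ _ _ hx]
  · congr 1
    apply List.filter_congr
    intro x hx
    simp only [Function.comp]
    rw [List.getD_append_right _ _ _ _ (Nat.le_add_right _ _)]
    simp

lemma pos_singleton (d x : Bool) : pos d [x] = if x = !d then [0] else [] := by
  cases d <;> cases x <;> simp [pos] <;> decide

lemma length_pos (d : Bool) (w : List Bool) : (pos d w).length = w.count (!d) := by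
  induction w using List.reverseRecOn with
  | nil => rfl
  | append_singleton w x ih =>
      rw [pos_append, List.length_append, List.count_append, ih, pos_singleton]
      cases d <;> cases x <;> simp

lemma mem_pos {d : Bool} {w : List Bool} {q : ℕ} (h : q ∈ pos d w) :
    q < w.length ∧ w.getD q d = !d := by
  unfold pos at h
  simp only [List.mem_filter, List.mem_range] at h
  exact ⟨h.1, by simpa using h.2⟩

lemma pairwise_pos (d : Bool) (w : List Bool) : (pos d w).Pairwise (· < ·) :=
  List.Pairwise.sublist List.filter_sublist List.pairwise_lt_range
-- L4: in a strictly sorted list, #elements below the k-th = k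
lemma sorted_filter_lt (l : List ℕ) (hl : l.Pairwise (· < ·)) :
    ∀ k, k < l.length → (l.filter (fun x => x < l.getD k 0)).length = k := by
  induction l with
  | nil => intro k hk; simp at hk
  | cons x xs ih =>
      intro k hk
      rcases List.pairwise_cons.mp hl with ⟨hx, hxs⟩
      cases k with
      | zero =>
          simp only [List.getD_cons_zero]
          rw [List.length_eq_zero_iff]
          rw [List.filter_eq_nil_iff]
          intro y hy
          simp only [decide_eq_true_eq, not_lt]
          rcases List.mem_cons.mp hy with rfl | h
          · exact le_refl _
          · exact le_of_lt (hx y h)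
      | succ k =>
          have hk' : k < xs.length := by simpa using hk
          have hy : (x :: xs).getD (k+1) 0 = xs.getD k 0 := by
            simp [List.getD_cons_succ]
          rw [hy, List.filter_cons]
          have hxy : x < xs.getD k 0 := by
            apply hx
            rw [List.getD_eq_getElem _ _ hk']
            exact List.getElem_mem hk'
          rw [if_pos (by simpa using hxy), List.length_cons, ih hxs k hk']

-- L9
lemma range_filter_lt (n q : ℕ) (h : q ≤ n) :
    (List.range n).filter (fun x => x < q) = List.range q := by
  obtain ⟨s, rfl⟩ := Nat.exists_eq_add_of_le h
  rw [List.range_add, List.filter_append]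
  have h1 : (List.range q).filter (fun x => x < q) = List.range q := by
    rw [List.filter_eq_self]; intro x hx; simpa using List.mem_range.mp hx
  have h2 : (List.map (fun x => q + x) (List.range s)).filter (fun x => x < q) = [] := by
    rw [List.filter_eq_nil_iff]; intro y hy
    rcases List.mem_map.mp hy with ⟨z, _, rfl⟩
    simp
  rw [h1, h2, List.append_nil]

-- filter commute helper
lemma filter_filter_comm {α : Type*} (p q : α → Bool) (l : List α) :
    (l.filter p).filter q = (l.filter q).filter p := by
  simp only [List.filter_filter]
  apply List.filter_congr
  intro x _
  simp [Bool.and_comm]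

-- counting falses in range-prefix
lemma count_take (d : Bool) (w : List Bool) :
    ∀ q, q ≤ w.length →
      (w.take q).count (!d) = ((List.range q).filter (fun p => w.getD p d = !d)).length := by
  intro q
  induction q with
  | zero => intro _; simp
  | succ q ih =>
      intro hq
      have hq' : q < w.length := hq
      have h2 : w.take (q+1) = w.take q ++ [w[q]] := by
        rw [List.take_succ, List.getElem?_eq_getElem hq']; rfl
      rw [List.range_succ, List.filter_append, List.length_append, h2,
        List.count_append, ih (le_of_lt hq')]
      have hgd : w.getD q d = w[q] := List.getD_eq_getElem _ _ hq'
      by_cases hw : w[q] = !d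
      · simp [List.filter_singleton, List.getElem?_eq_getElem hq', hgd, hw, List.count_singleton']
      · simp [List.filter_singleton, List.getElem?_eq_getElem hq', hgd, hw, List.count_singleton']
lemma count_tf (w : List Bool) : w.count true + w.count false = w.length := by
  induction w with
  | nil => rfl
  | cons x t ih => cases x <;> simp [List.count_cons] <;> omega

lemma count_take_both (w : List Bool) (q : ℕ) (h : q ≤ w.length) :
    (w.take q).count true + (w.take q).count false = q := by
  rw [count_tf]; simp [h]

-- L7 characterization
lemma kIdx_eq_of (d : Bool) (w : List Bool) (m q : ℕ) (hm : 1 ≤ m)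
    (hq : q < w.length) (hw : w.getD q d = !d)
    (hc : ((List.range q).filter (fun p => w.getD p d = !d)).length = m - 1) :
    kIdx d w m = q := by
  unfold kIdx pos
  have hdecomp : List.range w.length =
      List.range q ++ List.map (fun x => q + x) (List.range (w.length - q)) := by
    rw [← List.range_add, Nat.add_sub_cancel' (le_of_lt hq)]
  rw [hdecomp, List.filter_append]
  obtain ⟨s, hs⟩ : ∃ s, w.length - q = s + 1 := ⟨w.length - q - 1, by omega⟩
  rw [hs, List.range_succ_eq_map]
  simp only [List.map_cons, Nat.add_zero, List.filter_cons]
  rw [if_pos (by simpa using hw)]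
  rw [List.getD_append_right _ _ _ _ (le_of_eq hc), hc, Nat.sub_self]
  simp
-- L8 inverse characterization
lemma kIdx_spec (d : Bool) (w : List Bool) (m : ℕ) (hm1 : 1 ≤ m)
    (hm2 : m ≤ w.count (!d)) :
    kIdx d w m < w.length ∧ w.getD (kIdx d w m) d = !d ∧
    (w.take (kIdx d w m)).count (!d) = m - 1 ∧
    (w.take (kIdx d w m)).count d = kIdx d w m - (m - 1) := by
  have hlt : m - 1 < (pos d w).length := by rw [length_pos]; omega
  have hmem : kIdx d w m ∈ pos d w := by
    unfold kIdx
    rw [List.getD_eq_getElem _ _ hlt]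
    exact List.getElem_mem hlt
  obtain ⟨hq, hw⟩ := mem_pos hmem
  set q := kIdx d w m with hqdef
  have hcount : ((List.range q).filter (fun p => w.getD p d = !d)).length = m - 1 := by
    have h1 : (List.range q).filter (fun p => w.getD p d = !d)
        = (pos d w).filter (fun x => x < q) := by
      unfold pos
      rw [filter_filter_comm, range_filter_lt _ _ (le_of_lt hq)]
    rw [h1]
    exact sorted_filter_lt _ (pairwise_pos d w) (m-1) hlt
  have hcf : (w.take q).count (!d) = m - 1 := by
    rw [count_take d w q (le_of_lt hq)]; exact hcount
  refine ⟨hq, hw, hcf, ?_⟩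
  have := count_take_both w q (le_of_lt hq)
  cases d
  · simp only [Bool.not_false] at hcf ⊢; omega
  · simp only [Bool.not_true] at hcf ⊢; omega

-- L11 append-stable
lemma kIdx_append (d : Bool) (w v : List Bool) (m : ℕ) (hm1 : 1 ≤ m) (hm2 : m ≤ w.count (!d)) :
    kIdx d (w ++ v) m = kIdx d w m := by
  unfold kIdx
  rw [pos_append]
  exact List.getD_append _ _ _ _ (by rw [length_pos]; omega)

-- L12 append-new
lemma kIdx_append_new (d : Bool) (w v : List Bool) (s : ℕ) (hs1 : 1 ≤ s)
    (hs2 : s ≤ v.count (!d)) :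
    kIdx d (w ++ v) (w.count (!d) + s) = w.length + kIdx d v s := by
  unfold kIdx
  rw [pos_append]
  rw [List.getD_append_right _ _ _ _ (by rw [length_pos]; omega)]
  rw [length_pos]
  have h1 : w.count (!d) + s - 1 - w.count (!d) = s - 1 := by omega
  rw [h1]
  have h2 : s - 1 < (pos d v).length := by rw [length_pos]; omega
  rw [List.getD_eq_getElem _ _ (by simpa using h2), List.getElem_map,
    List.getD_eq_getElem _ _ h2]

-- L13 replicate
lemma kIdx_replicate (d : Bool) (t s : ℕ) (hs2 : s ≤ t) :
    kIdx d (List.replicate t (!d)) s = s - 1 := by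
  unfold kIdx
  have h1 : pos d (List.replicate t (!d)) = List.range t := by
    unfold pos
    simp only [List.length_replicate]
    rw [List.filter_eq_self]
    intro x hx
    rw [List.getD_eq_getElem _ _ (by simpa using List.mem_range.mp hx)]
    simp
  rw [h1]
  rcases Nat.eq_zero_or_pos s with rfl | hs
  · rcases Nat.eq_zero_or_pos t with rfl | ht
    · rfl
    · rw [List.getD_eq_getElem _ _ (by simpa using ht), List.getElem_range]
  · rw [List.getD_eq_getElem _ _ (by simpa using (by omega : s - 1 < t)), List.getElem_range]

-- L14 monotone
lemma kIdx_mono (d : Bool) (w : List Bool) (m1 m2 : ℕ) (h1 : 1 ≤ m1) (h12 : m1 ≤ m2)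
    (h2 : m2 ≤ w.count (!d)) : kIdx d w m1 ≤ kIdx d w m2 := by
  rcases eq_or_lt_of_le h12 with rfl | hlt
  · exact le_refl _
  · have hl1 : m1 - 1 < (pos d w).length := by rw [length_pos]; omega
    have hl2 : m2 - 1 < (pos d w).length := by rw [length_pos]; omega
    unfold kIdx
    rw [List.getD_eq_getElem _ _ hl1, List.getD_eq_getElem _ _ hl2]
    exact le_of_lt ((List.pairwise_iff_getElem.mp (pairwise_pos d w)) _ _ hl1 hl2 (by omega))

-- hv
def hv (d : Bool) (w : List Bool) (m : ℕ) : ℕ := (w.take (kIdx d w m)).count d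

lemma heightVal_eq (w : List Bool) (k : ℕ) : heightVal w k = hv true w k := rfl
lemma stepVal_eq (w : List Bool) (k : ℕ) : stepVal w k = hv false w k := rfl

lemma hv_eq (d : Bool) (w : List Bool) (m : ℕ) (hm1 : 1 ≤ m) (hm2 : m ≤ w.count (!d)) :
    hv d w m = kIdx d w m - (m - 1) :=
  (kIdx_spec d w m hm1 hm2).2.2.2

lemma hv_le (d : Bool) (w : List Bool) (m : ℕ) : hv d w m ≤ w.count d :=
  (List.take_sublist _ _).count_le d

lemma hv_mono (d : Bool) (w : List Bool) (m1 m2 : ℕ) (h1 : 1 ≤ m1) (h12 : m1 ≤ m2)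
    (h2 : m2 ≤ w.count (!d)) : hv d w m1 ≤ hv d w m2 := by
  unfold hv
  have := kIdx_mono d w m1 m2 h1 h12 h2
  have heq : w.take (kIdx d w m1) = (w.take (kIdx d w m2)).take (kIdx d w m1) := by
    rw [List.take_take, min_eq_left this]
  rw [heq]
  exact (List.take_sublist _ _).count_le d

lemma hv_append (d : Bool) (w v : List Bool) (m : ℕ) (hm1 : 1 ≤ m)
    (hm2 : m ≤ w.count (!d)) : hv d (w ++ v) m = hv d w m := by
  unfold hv
  rw [kIdx_append d w v m hm1 hm2,
    List.take_append_of_le_length (le_of_lt (kIdx_spec d w m hm1 hm2).1)]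
def Lc (a b : ℕ) (d : Bool) : ℕ := bif d then b else a

lemma Lc_pos {a b : ℕ} (ha : 0 < a) (hb : 0 < b) (d : Bool) : 0 < Lc a b d := by
  cases d <;> simpa [Lc]

lemma enlarge_append (a b : ℕ) (w v : List Bool) :
    enlarge a b (w ++ v) = enlarge a b w ++ enlarge a b v :=
  List.flatMap_append

lemma enlarge_singleton (a b : ℕ) (c : Bool) :
    enlarge a b [c] = List.replicate (Lc a b c) c := by
  cases c <;> simp [enlarge, Lc]

lemma count_replicate' (t : ℕ) (c d : Bool) :
    (List.replicate t c).count d = if c = d then t else 0 := by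
  rw [List.count_replicate]
  cases c <;> cases d <;> simp

lemma count_enlarge (a b : ℕ) (d : Bool) (P : List Bool) :
    (enlarge a b P).count d = Lc a b d * P.count d := by
  induction P using List.reverseRecOn with
  | nil => simp [enlarge]
  | append_singleton w c ih =>
      rw [enlarge_append, List.count_append, ih, enlarge_singleton, List.count_append,
        count_replicate']
      by_cases h : c = d
      · subst h; simp [List.count_singleton', Nat.mul_add]
      · cases c <;> cases d <;> simp_all

lemma length_enlarge (a b : ℕ) (P : List Bool) :
    (enlarge a b P).length = b * P.count true + a * P.count false := by
  rw [← count_tf (enlarge a b P), count_enlarge, count_enlarge]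
  simp [Lc]

lemma hv_append_last (d : Bool) (w : List Bool) :
    hv d (w ++ [!d]) (w.count (!d) + 1) = w.count d := by
  have h1 : kIdx d (w ++ [!d]) (w.count (!d) + 1) = w.length := by
    have : ([!d] : List Bool) = List.replicate 1 (!d) := rfl
    have h2 := kIdx_append_new d w [!d] 1 (le_refl _)
      (by rw [this, count_replicate']; simp)
    rw [h2]
    rw [show kIdx d [!d] 1 = 0 from by
      rw [show ([!d] : List Bool) = List.replicate 1 (!d) from rfl,
        kIdx_replicate d 1 1 (le_refl _)]]
    rfl
  unfold hv
  rw [h1, List.take_append_of_le_length (le_refl _), List.take_length]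

lemma enl_kIdx (a b : ℕ) (ha : 0 < a) (hb : 0 < b) (d : Bool) (P : List Bool) :
    ∀ m, 1 ≤ m → m ≤ Lc a b (!d) * P.count (!d) →
      kIdx d (enlarge a b P) m
        = (m - 1) + Lc a b d * hv d P ((m - 1) / (Lc a b (!d)) + 1) := by
  set α := Lc a b (!d) with hα
  set β := Lc a b d with hβ
  have hα0 : 0 < α := Lc_pos ha hb _
  have hβ0 : 0 < β := Lc_pos ha hb _
  induction P using List.reverseRecOn with
  | nil => intro m hm1 hm2; simp at hm2; omega
  | append_singleton w c ih =>
      intro m hm1 hm2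
      rw [enlarge_append, enlarge_singleton]
      have hcntE : (enlarge a b w).count (!d) = α * w.count (!d) := count_enlarge a b (!d) w
      have hdivlt : ∀ m', 1 ≤ m' → m' ≤ α * w.count (!d) → (m' - 1) / α + 1 ≤ w.count (!d) := by
        intro m' h1 h2
        have h3 : m' - 1 < α * w.count (!d) := lt_of_lt_of_le (by omega) h2
        have := (Nat.div_lt_iff_lt_mul hα0).mpr (by rw [Nat.mul_comm] at h3; exact h3)
        omega
      by_cases hc : c = d
      · subst hc
        have hcnt : (w ++ [c]).count (!c) = w.count (!c) := by
          rw [List.count_append]; cases c <;> simp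
        rw [hcnt] at hm2
        rw [kIdx_append c _ _ m hm1 (by rw [hcntE]; exact hm2)]
        rw [hv_append c w [c] _ (Nat.succ_le_succ (Nat.zero_le _)) (hdivlt m hm1 hm2)]
        exact ih m hm1 hm2
      · have hc' : c = !d := by cases c <;> cases d <;> simp_all
        subst hc'
        have hcnt : (w ++ [!d]).count (!d) = w.count (!d) + 1 := by
          rw [List.count_append]; cases d <;> simp
        rw [hcnt] at hm2
        by_cases hm : m ≤ α * w.count (!d)
        · rw [kIdx_append d _ _ m hm1 (by rw [hcntE]; exact hm)]
          rw [hv_append d w [!d] _ (Nat.succ_le_succ (Nat.zero_le _)) (hdivlt m hm1 hm)]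
          exact ih m hm1 hm
        · set s := m - α * w.count (!d) with hs
          have hs1 : 1 ≤ s := by omega
          have hs2 : s ≤ α := by
            have h4 : m ≤ α * w.count (!d) + α := by
              rw [Nat.mul_add, Nat.mul_one] at hm2; exact hm2
            omega
          have hrep : (List.replicate α (!d) : List Bool).count (!d) = α := by
            rw [count_replicate']; simp
          have hm' : m = (enlarge a b w).count (!d) + s := by rw [hcntE]; omega
          rw [hm', kIdx_append_new d _ _ s hs1 (by rw [hrep]; exact hs2),
            kIdx_replicate d α s hs2, ← hm']
          have hdiv : (m - 1) / α = w.count (!d) := by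
            have h1 : m - 1 = α * w.count (!d) + (s - 1) := by omega
            rw [h1, Nat.mul_add_div hα0, Nat.div_eq_of_lt (by omega)]
            rfl
          rw [hdiv, hv_append_last]
          have hlenE : (enlarge a b w).length = β * w.count d + α * w.count (!d) := by
            rw [length_enlarge]
            cases d
            · simp only [hβ, hα, Lc, Bool.not_false, cond_true, cond_false]
              exact Nat.add_comm _ _
            · simp only [hβ, hα, Lc, Bool.not_true, cond_true, cond_false]
          rw [hlenE]
          omega

-- habove consequences
lemma habove_height (a b : ℕ) (P : List Bool)
    (habove : ∀ p, a * ((P.take p).count false) ≤ b * ((P.take p).count true))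
    (k : ℕ) (hk1 : 1 ≤ k) (hk2 : k ≤ P.count false) :
    a * k ≤ b * hv true P k := by
  obtain ⟨hq, hw, hcf, hct⟩ := kIdx_spec true P k hk1 (by simpa using hk2)
  set q := kIdx true P k
  have htake : P.take (q+1) = P.take q ++ [P[q]] := by
    rw [List.take_succ, List.getElem?_eq_getElem hq]; rfl
  have hPq : P[q] = false := by
    have := List.getD_eq_getElem P true hq
    simp only [this] at hw; simpa using hw
  simp only [Bool.not_true] at hcf hct
  have hcf1 : (P.take (q+1)).count false = k := by
    rw [htake, List.count_append, hcf, hPq]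
    simp only [List.count_singleton']
    simp
    omega
  have hct1 : (P.take (q+1)).count true = q - (k-1) := by
    rw [htake, List.count_append, hct, hPq]
    simp [List.count_singleton']
  have h := habove (q+1)
  rw [hcf1, hct1] at h
  have : hv true P k = q - (k-1) := hv_eq true P k hk1 (by simpa using hk2)
  rw [this]
  exact h

lemma habove_step (a b : ℕ) (P : List Bool)
    (habove : ∀ p, a * ((P.take p).count false) ≤ b * ((P.take p).count true))
    (k : ℕ) (hk1 : 1 ≤ k) (hk2 : k ≤ P.count true) :
    a * hv false P k ≤ b * (k - 1) := by
  obtain ⟨hq, hw, hcf, hct⟩ := kIdx_spec false P k hk1 (by simpa using hk2)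
  have h := habove (kIdx false P k)
  simp only [Bool.not_false] at hcf hct
  rw [hcf] at h
  have : hv false P k = kIdx false P k - (k-1) := hv_eq false P k hk1 (by simpa using hk2)
  rw [this, ← hct]
  exact h
lemma range_filter_eq (r c : ℕ) (h : c < r) :
    (List.range r).filter (fun s => s = c) = [c] := by
  induction r with
  | zero => omega
  | succ r ih =>
      rw [List.range_succ, List.filter_append]
      rcases Nat.lt_or_ge c r with h' | h'
      · rw [ih h']
        have h2 : (List.filter (fun s => s = c) [r]) = [] := by
          rw [List.filter_eq_nil_iff]; intro y hy; simp at hy; subst hy; simp; omega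
        rw [h2, List.append_nil]
      · have hc : c = r := by omega
        subst hc
        have h1 : (List.range c).filter (fun s => s = c) = [] := by
          rw [List.filter_eq_nil_iff]; intro y hy
          have := List.mem_range.mp hy; simp; omega
        rw [h1]; simp

lemma range_filter_mod (r t c : ℕ) (hc : c < r) :
    (List.range (r * t)).filter (fun p => p % r = c)
      = (List.range t).map (fun q => c + q * r) := by
  induction t with
  | zero => simp
  | succ t ih =>
      rw [Nat.mul_succ, List.range_add, List.filter_append, ih, List.range_succ,
        List.map_append, List.filter_map]
      congr 1
      have h1 : (List.range r).filter ((fun p => decide (p % r = c)) ∘ (fun x => r * t + x))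
          = [c] := by
        rw [← range_filter_eq r c hc]
        apply List.filter_congr
        intro x hx
        have hx' := List.mem_range.mp hx
        simp [Function.comp, Nat.mul_add_mod, Nat.mod_eq_of_lt hx']
      rw [h1]
      simp [Nat.add_comm, Nat.mul_comm]

lemma filter_range_downward (n : ℕ) (q : ℕ → Bool)
    (hdc : ∀ x y, x ≤ y → y < n → q y = true → q x = true) :
    (List.range n).filter q = List.range (((List.range n).filter q).length) := by
  induction n with
  | zero => rfl
  | succ n ih =>
      rw [List.range_succ, List.filter_append]
      by_cases hq : q n = true
      · have hall : (List.range n).filter q = List.range n := by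
          rw [List.filter_eq_self]
          intro x hx
          exact hdc x n (le_of_lt (List.mem_range.mp hx)) (Nat.lt_succ_self n) hq
        rw [hall, List.filter_singleton, hq, cond_true, List.length_append, List.length_range]
        simp [List.range_succ]
      · have hdc' : ∀ x y, x ≤ y → y < n → q y = true → q x = true :=
          fun x y h1 h2 => hdc x y h1 (by omega)
        rw [List.filter_singleton, eq_false_of_ne_true hq, cond_false, List.append_nil]
        exact ih hdc'

lemma cnt_lt_spec (n' p : ℕ) (v : ℕ → ℕ) (hmono : ∀ x y, x < y → y < n' → v x < v y) :
    ((List.range n').filter (fun x => v x < p)).length ≤ n' ∧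
    (((List.range n').filter (fun x => v x < p)).length < n' →
      p ≤ v (((List.range n').filter (fun x => v x < p)).length)) ∧
    (1 ≤ ((List.range n').filter (fun x => v x < p)).length →
      v (((List.range n').filter (fun x => v x < p)).length - 1) < p) := by
  have hdc : ∀ x y, x ≤ y → y < n' → (decide (v y < p)) = true → (decide (v x < p)) = true := by
    intro x y hxy hy hq
    simp only [decide_eq_true_eq] at hq ⊢
    rcases eq_or_lt_of_le hxy with rfl | hlt
    · exact hq
    · exact lt_trans (hmono x y hlt hy) hq
  have heq := filter_range_downward n' (fun x => decide (v x < p)) hdc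
  refine ⟨le_trans (List.length_filter_le _ _) (le_of_eq List.length_range), ?_, ?_⟩
  · intro hlt
    by_contra hp
    push_neg at hp
    have hm : (((List.range n').filter (fun x => v x < p)).length)
        ∈ (List.range n').filter (fun x => v x < p) :=
      List.mem_filter.mpr ⟨List.mem_range.mpr hlt, by simpa using hp⟩
    have hlt2 : ∀ x, x ∈ (List.range n').filter (fun x => v x < p) →
        x < ((List.range n').filter (fun x => v x < p)).length := by
      intro x hx
      have hx' : x ∈ List.range (((List.range n').filter (fun x => v x < p)).length) := by
        rw [← heq]; exact hx
      exact List.mem_range.mp hx'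
    exact absurd (hlt2 _ hm) (lt_irrefl _)
  · intro h1
    have hm : (((List.range n').filter (fun x => v x < p)).length - 1)
        ∈ List.range (((List.range n').filter (fun x => v x < p)).length) :=
      List.mem_range.mpr (by omega)
    rw [← heq] at hm
    have := (List.mem_filter.mp hm).2
    simpa using this

lemma cnt_lt_exact (n' j : ℕ) (v : ℕ → ℕ) (hmono : ∀ x y, x < y → y < n' → v x < v y)
    (hj : j < n') : (List.range n').filter (fun x => v x < v j) = List.range j := by
  have hcg : ∀ x ∈ List.range n', (decide (v x < v j)) = (decide (x < j)) := by
    intro x hx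
    have hx' := List.mem_range.mp hx
    by_cases h : x < j
    · simp [h, hmono x j h hj]
    · have hnot : ¬ v x < v j := by
        rcases eq_or_lt_of_le (not_lt.mp h) with rfl | hlt
        · exact lt_irrefl _
        · exact not_lt.mpr (le_of_lt (hmono j x hlt hx'))
      simp [h, hnot]
  rw [List.filter_congr hcg, range_filter_lt n' j (le_of_lt hj)]

lemma count_tf' (d : Bool) (w : List Bool) : w.count d + w.count (!d) = w.length := by
  cases d
  · rw [Nat.add_comm]; exact count_tf w
  · exact count_tf w

lemma pos_eq_map (d : Bool) (w : List Bool) :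
    pos d w = (List.range (w.count (!d))).map (fun m0 => kIdx d w (m0+1)) := by
  apply List.ext_getElem
  · simp [length_pos]
  · intro n h1 h2
    rw [List.getElem_map, List.getElem_range]
    unfold kIdx
    rw [length_pos] at h1
    rw [List.getD_eq_getElem _ _ (by rw [length_pos]; omega : n + 1 - 1 < (pos d w).length)]
    simp

lemma mul_sub_one_div (x y : ℕ) (hx : 0 < x) (hy : 0 < y) : (x*y - 1)/x = y - 1 := by
  have h1 : x*y = x*(y-1) + x := by
    rw [← Nat.mul_succ]; congr 1; omega
  have h2 : x*y - 1 = x*(y-1) + (x-1) := by omega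
  rw [h2, Nat.mul_add_div hx, Nat.div_eq_of_lt (by omega)]
  rfl
lemma chain (w : List Bool) (d : Bool) (r s n' : ℕ) (φ : ℕ → ℕ)
    (hr : 0 < r) (hs : 0 < s) (hn' : 0 < n')
    (hlen : w.length = r * (2 * n'))
    (hcount : w.count (!d) = r * n')
    (HK : ∀ m0, m0 < r * n' → kIdx d w (m0+1) = m0 + r * φ (m0/s + 1))
    (hphile : ∀ k, 1 ≤ k → k ≤ (r * n' - 1)/s + 1 → φ k ≤ n')
    (hphimono : ∀ k1 k2, 1 ≤ k1 → k1 ≤ k2 → k2 ≤ (r * n' - 1)/s + 1 → φ k1 ≤ φ k2)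
    (i : ℕ) (hi1 : 1 ≤ i) (hir : i ≤ r) :
    (subword r i w).length = 2*n' ∧
    (subword r i w).count (!d) = n' ∧
    (subword r i w).count d = n' ∧
    (∀ p, p ≤ 2*n' → ((subword r i w).take p).count (!d)
        = ((List.range n').filter
            (fun j0 => j0 + φ ((i - 1 + j0*r)/s + 1) < p)).length) ∧
    (∀ j, 1 ≤ j → j ≤ n' →
        kIdx d (subword r i w) j = (j-1) + φ ((i - 1 + (j-1)*r)/s + 1) ∧
        hv d (subword r i w) j = φ ((i - 1 + (j-1)*r)/s + 1)) ∧
    (∀ x y, x < y → y < n' →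
        x + φ ((i - 1 + x*r)/s + 1) < y + φ ((i - 1 + y*r)/s + 1)) := by
  have hrn : 0 < r * n' := Nat.mul_pos hr hn'
  set c := i - 1 with hc
  have hcr : c < r := by omega
  set g : ℕ → Bool := fun q => w.getD (c + q*r) false with hg
  set v : ℕ → ℕ := fun j0 => j0 + φ ((c + j0*r)/s + 1) with hv'
  set F : ℕ → ℕ := fun q => c + q*r with hF
  have hFinj : Function.Injective F := by
    intro x y h
    simp only [hF] at h
    have : x * r = y * r := by omega
    exact Nat.eq_of_mul_eq_mul_right hr this
  have hposlt : ∀ q, q < 2*n' → c + q*r < w.length := by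
    intro q hq
    rw [hlen]
    calc c + q*r < r + q*r := by omega
      _ = (q+1)*r := by ring
      _ ≤ (2*n')*r := Nat.mul_le_mul_right _ (by omega)
      _ = r*(2*n') := Nat.mul_comm _ _
  have hm0lt : ∀ j0, j0 < n' → c + j0*r ≤ r*n' - 1 := by
    intro j0 hj0
    have h1 : j0 * r ≤ (n' - 1)*r := Nat.mul_le_mul_right r (by omega)
    have h3 : n'*r = (n'-1)*r + r := by rw [← Nat.succ_mul]; congr 1; omega
    have h4 : n'*r = r*n' := Nat.mul_comm _ _
    omega
  have hargle : ∀ j0, j0 < n' → (c + j0*r)/s + 1 ≤ (r*n' - 1)/s + 1 := by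
    intro j0 hj0
    exact Nat.succ_le_succ (Nat.div_le_div_right (hm0lt j0 hj0))
  have hvmono : ∀ x y, x < y → y < n' → v x < v y := by
    intro x y hxy hy
    have h1 : φ ((c + x*r)/s + 1) ≤ φ ((c + y*r)/s + 1) := by
      refine hphimono _ _ (Nat.succ_le_succ (Nat.zero_le _)) ?_ (hargle y hy)
      exact Nat.succ_le_succ (Nat.div_le_div_right (by
        have := Nat.mul_le_mul_right r (le_of_lt hxy); omega))
    simp only [hv']
    generalize φ ((c + x*r)/s + 1) = t1 at h1 ⊢
    generalize φ ((c + y*r)/s + 1) = t2 at h1 ⊢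
    omega
  have hvlt : ∀ j0, j0 < n' → v j0 < 2*n' := by
    intro j0 hj0
    have hb := hphile ((c + j0*r)/s + 1) (Nat.succ_le_succ (Nat.zero_le _)) (hargle j0 hj0)
    simp only [hv']
    generalize φ ((c + j0*r)/s + 1) = t1 at hb ⊢
    omega
  -- subword as map
  have hS : subword r i w = (List.range (2*n')).map g := by
    unfold subword
    rw [hlen, ← hc, range_filter_mod r (2*n') c hcr, List.map_map]
    rfl
  -- core identity
  have hA : (List.range (2*n')).filter (fun q => g q = !d) = (List.range n').map v := by
    apply List.map_injective_iff.mpr hFinj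
    have e2 : (List.range (2*n')).filter (fun q => g q = !d)
        = (List.range (2*n')).filter ((fun p => w.getD p d = !d) ∘ F) := by
      apply List.filter_congr
      intro q hq
      have hq' := List.mem_range.mp hq
      have hlt := hposlt q hq'
      simp only [hg, hF, Function.comp]
      simp only [List.getD_eq_getElem w false hlt, List.getD_eq_getElem w d hlt]
    rw [e2, ← List.filter_map]
    rw [show List.map F (List.range (2*n'))
        = (List.range (r*(2*n'))).filter (fun p => p % r = c) from
      (range_filter_mod r (2*n') c hcr).symm]
    rw [filter_filter_comm]
    have e3 : (List.range (r*(2*n'))).filter (fun p => w.getD p d = !d) = pos d w := by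
      unfold pos; rw [hlen]
    rw [e3, pos_eq_map, hcount]
    have e4 : (List.range (r*n')).map (fun m0 => kIdx d w (m0+1))
        = (List.range (r*n')).map (fun m0 => m0 + r * φ (m0/s + 1)) := by
      apply List.map_congr_left
      intro m0 hm0
      exact HK m0 (List.mem_range.mp hm0)
    rw [e4, List.filter_map]
    have e5 : (List.range (r*n')).filter
          ((fun p => decide (p % r = c)) ∘ (fun m0 => m0 + r * φ (m0/s + 1)))
        = (List.range (r*n')).filter (fun m0 => m0 % r = c) := by
      apply List.filter_congr
      intro m0 _
      simp only [Function.comp]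
      rw [Nat.add_mul_mod_self_left]
    rw [e5, range_filter_mod r n' c hcr, List.map_map, List.map_map]
    apply List.map_congr_left
    intro j0 _
    simp only [Function.comp, hF, hv']
    ring
  -- counts
  have hlenS : (subword r i w).length = 2*n' := by rw [hS]; simp
  have hcount_map : ∀ (l : List ℕ) (e : Bool),
      ((l.map g).count e) = (l.filter (fun q => g q = e)).length := by
    intro l e
    rw [List.count_eq_countP, List.countP_map, List.countP_eq_length_filter]
    congr 1
  have hcntS' : (subword r i w).count (!d) = n' := by
    rw [hS, hcount_map, hA, List.length_map, List.length_range]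
  have hcntSd : (subword r i w).count d = n' := by
    have hh := count_tf' d (subword r i w)
    rw [hcntS', hlenS] at hh
    omega
  -- prefix computation
  have hPC : ∀ p, p ≤ 2*n' → (List.range p).filter (fun q => g q = !d)
      = ((List.range n').filter (fun j0 => v j0 < p)).map v := by
    intro p hp
    have e6 : (List.range p).filter (fun q => g q = !d)
        = ((List.range (2*n')).filter (fun q => g q = !d)).filter (fun x => x < p) := by
      rw [filter_filter_comm, range_filter_lt _ _ hp]
    rw [e6, hA, List.filter_map]
    congr 1
  have hC4 : ∀ p, p ≤ 2*n' → ((subword r i w).take p).count (!d)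
      = ((List.range n').filter (fun j0 => v j0 < p)).length := by
    intro p hp
    have htake : (subword r i w).take p = (List.range p).map g := by
      rw [hS, ← List.map_take, List.take_range, inf_eq_left.mpr hp]
    rw [htake, hcount_map, hPC p hp, List.length_map]
  -- the j-th tracked letter
  have hC5 : ∀ j, 1 ≤ j → j ≤ n' →
      kIdx d (subword r i w) j = (j-1) + φ ((c + (j-1)*r)/s + 1) ∧
      hv d (subword r i w) j = φ ((c + (j-1)*r)/s + 1) := by
    intro j hj1 hj2
    have hjn : j - 1 < n' := by omega
    have hqlt : v (j-1) < 2*n' := hvlt _ hjn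
    have hgv : g (v (j-1)) = !d := by
      set m0 := c + (j-1)*r with hm0d
      have hm0' : m0 < r*n' := by have := hm0lt (j-1) hjn; omega
      have hKK := HK m0 hm0'
      have hpos2 : c + (v (j-1))*r = kIdx d w (m0+1) := by
        rw [hKK]
        simp only [hv', hm0d]
        ring
      obtain ⟨hlt3, hw3, -, -⟩ := kIdx_spec d w (m0+1) (by omega) (by rw [hcount]; omega)
      simp only [hg]
      rw [hpos2, List.getD_eq_getElem _ _ hlt3]
      rw [List.getD_eq_getElem _ _ hlt3] at hw3
      exact hw3
    have hkidx : kIdx d (subword r i w) j = v (j-1) := by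
      refine kIdx_eq_of d _ j (v (j-1)) hj1 (by rw [hlenS]; exact hqlt) ?_ ?_
      · rw [hS, List.getD_eq_getElem _ _ (by simpa using hqlt), List.getElem_map,
          List.getElem_range]
        exact hgv
      · have e7 : (List.range (v (j-1))).filter
            (fun p => (subword r i w).getD p d = !d)
            = (List.range (v (j-1))).filter (fun q => g q = !d) := by
          apply List.filter_congr
          intro q hq
          have hq2 : q < 2*n' := lt_trans (List.mem_range.mp hq) hqlt
          rw [hS, List.getD_eq_getElem _ _ (by simpa using hq2), List.getElem_map,
            List.getElem_range]
        rw [e7, hPC (v (j-1)) (le_of_lt hqlt), List.length_map,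
          cnt_lt_exact n' (j-1) v hvmono hjn, List.length_range]
    have hhv := hv_eq d (subword r i w) j hj1 (by rw [hcntS']; exact hj2)
    rw [hkidx] at hhv
    refine ⟨by rw [hkidx], ?_⟩
    rw [hhv]
    simp only [hv']
    generalize φ ((c + (j-1)*r)/s + 1) = t1
    omega
  exact ⟨hlenS, hcntS', hcntSd, hC4, hC5, hvmono⟩

/-- for the word `P` of an (a,b)-Dyck path of size `n`
(`true` = N, `false` = E) and its (a,b)-enlargement `P̃`:
(a) for `1 ≤ i ≤ b`, `P̃^{(b)}_i` is a (1,1)-Dyck word of size `a*n` whose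
height sequence is `𝔥_i(j) = h ⌈(i+(j-1)b)/a⌉` (the `i`-th height sequence of
the horizontal strip-decomposition `δ(P)`, `h` being the height sequence of `P`);
(b) for `1 ≤ i ≤ a`, `P̃^{(a)}_i` is a (1,1)-Dyck word of size `b*n` whose step
sequence is `ū_i(j) = u ⌈(a(j-1)+i)/b⌉` (the `i`-th step sequence of the
vertical strip-decomposition `θ(P)`, `u` being the step sequence of `P`). -/
theorem enlarged_subwords_are_strip_decompositions (a b n : ℕ)
    (ha : 0 < a) (hb : 0 < b) (hn : 0 < n) (hab : Nat.Coprime a b)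
    (P : List Bool)
    (hlen : P.length = (a + b) * n)
    (hN : P.count true = a * n)
    (hE : P.count false = b * n)
    (habove : ∀ p, a * ((P.take p).count false) ≤ b * ((P.take p).count true)) :
    (∀ i, 1 ≤ i → i ≤ b →
      (subword b i (enlarge a b P)).count true = a * n ∧
      (subword b i (enlarge a b P)).count false = a * n ∧
      (∀ p, ((subword b i (enlarge a b P)).take p).count false ≤
            ((subword b i (enlarge a b P)).take p).count true) ∧
      (∀ j, 1 ≤ j → j ≤ a * n →
        heightVal (subword b i (enlarge a b P)) j
          = heightVal P ((i + (j - 1) * b + a - 1) / a))) ∧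
    (∀ i, 1 ≤ i → i ≤ a →
      (subword a i (enlarge a b P)).count true = b * n ∧
      (subword a i (enlarge a b P)).count false = b * n ∧
      (∀ p, ((subword a i (enlarge a b P)).take p).count false ≤
            ((subword a i (enlarge a b P)).take p).count true) ∧
      (∀ j, 1 ≤ j → j ≤ b * n →
        stepVal (subword a i (enlarge a b P)) j
          = stepVal P ((a * (j - 1) + i + b - 1) / b))) := by
  have han : 0 < a * n := Nat.mul_pos ha hn
  have hbn : 0 < b * n := Nat.mul_pos hb hn
  have hdiva : (b*(a*n) - 1)/a + 1 = b*n := by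
    rw [show b*(a*n) = a*(b*n) from by ring, mul_sub_one_div a (b*n) ha hbn]
    omega
  have hdivb : (a*(b*n) - 1)/b + 1 = a*n := by
    rw [show a*(b*n) = b*(a*n) from by ring, mul_sub_one_div b (a*n) hb han]
    omega
  constructor
  · -- PART (a)
    intro i hi1 hib
    have Ca := chain (enlarge a b P) true b a (a*n) (hv true P) hb ha han
      (by rw [length_enlarge, hN, hE]; ring)
      (by rw [show (!true) = false from rfl, count_enlarge, hE,
            show Lc a b false = a from rfl]; ring)
      (by
        intro m0 hm0
        have hprod : a * (b*n) = b*(a*n) := by ring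
        have h := enl_kIdx a b ha hb true P (m0+1) (by omega)
          (by show m0 + 1 ≤ a * P.count false; rw [hE]; omega)
        simpa [Lc] using h)
      (by
        intro k _ _
        have h := hv_le true P k
        rw [hN] at h
        exact h)
      (by
        intro k1 k2 h1 h12 h2
        rw [hdiva] at h2
        exact hv_mono true P k1 k2 h1 h12 (by rw [show (!true) = false from rfl, hE]; exact h2))
      i hi1 hib
    obtain ⟨hlS, hcF, hcT, hC4, hC5, hvm⟩ := Ca
    have hcF' : (subword b i (enlarge a b P)).count false = a*n := hcF
    refine ⟨hcT, hcF', ?_, ?_⟩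
    · -- dominance
      intro p
      rcases le_or_gt p (2*(a*n)) with hp | hp
      · have hcf : ((subword b i (enlarge a b P)).take p).count false
            = ((List.range (a*n)).filter
              (fun j0 => j0 + hv true P ((i - 1 + j0*b)/a + 1) < p)).length := hC4 p hp
        have hlt : ((subword b i (enlarge a b P)).take p).length = p := by
          rw [List.length_take, hlS]; omega
        have hsum := count_tf ((subword b i (enlarge a b P)).take p)
        rw [hlt] at hsum
        have hspec0 := cnt_lt_spec (a*n) p
            (fun j0 => j0 + hv true P ((i - 1 + j0*b)/a + 1)) hvm
        have hcle := hspec0.1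
        have hspec := hspec0.2.2
        beta_reduce at hspec hcle
        set cnt := ((List.range (a*n)).filter
          (fun j0 => j0 + hv true P ((i - 1 + j0*b)/a + 1) < p)).length with hcnt
        rcases Nat.eq_zero_or_pos cnt with h0 | h1
        · omega
        · have hspec2 : (cnt - 1) + hv true P ((i - 1 + (cnt-1)*b)/a + 1) < p := hspec h1
          clear hspec
          set x := i - 1 + (cnt-1)*b with hx
          set k := x/a + 1 with hk
          have hxle : x ≤ a*n*b - 1 := by
            have h2 : (cnt-1)*b ≤ (a*n-1)*b := Nat.mul_le_mul_right b (by omega)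
            have h3 : (a*n)*b = (a*n-1)*b + b := by
              rw [← Nat.succ_mul]; congr 1; omega
            omega
          have hkbn : k ≤ b*n := by
            have h4 : x/a ≤ (a*n*b - 1)/a := Nat.div_le_div_right hxle
            have h5 : (a*n*b - 1)/a = n*b - 1 := by
              rw [show a*n*b = a*(n*b) from by ring, mul_sub_one_div a (n*b) ha
                (Nat.mul_pos hn hb)]
            have h6 : n*b = b*n := Nat.mul_comm _ _
            omega
          have hhab := habove_height a b P habove k (by rw [hk]; exact Nat.succ_le_succ (Nat.zero_le _)) (by rw [hE]; exact hkbn)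
          have e3 : a * k = a*(x/a) + a := by rw [hk]; ring
          have e4 := Nat.div_add_mod x a
          have e5 : x % a < a := Nat.mod_lt _ ha
          have e6 : (cnt-1)*b < (hv true P k)*b := by
            have e7 : b * hv true P k = hv true P k * b := Nat.mul_comm _ _
            omega
          have e8 : cnt - 1 < hv true P k := Nat.lt_of_mul_lt_mul_right e6
          omega
      · have h1 : (subword b i (enlarge a b P)).take p = subword b i (enlarge a b P) :=
          List.take_of_length_le (by rw [hlS]; omega)
        rw [h1, hcF', hcT]
    · -- height values
      intro j hj1 hj2
      have h5 := (hC5 j hj1 hj2).2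
      rw [heightVal_eq, h5, heightVal_eq]
      congr 1
      have e1 : i + (j-1)*b + a - 1 = (i - 1 + (j-1)*b) + a := by omega
      rw [e1, Nat.add_div_right _ ha]
  · -- PART (b)
    intro i hi1 hia
    have Cb := chain (enlarge a b P) false a b (b*n) (hv false P) ha hb hbn
      (by rw [length_enlarge, hN, hE]; ring)
      (by rw [show (!false) = true from rfl, count_enlarge, hN,
            show Lc a b true = b from rfl]; ring)
      (by
        intro m0 hm0
        have hprod : b * (a*n) = a*(b*n) := by ring
        have h := enl_kIdx a b ha hb false P (m0+1) (by omega)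
          (by show m0 + 1 ≤ b * P.count true; rw [hN]; omega)
        simpa [Lc] using h)
      (by
        intro k _ _
        have h := hv_le false P k
        rw [hE] at h
        exact h)
      (by
        intro k1 k2 h1 h12 h2
        rw [hdivb] at h2
        exact hv_mono false P k1 k2 h1 h12 (by rw [show (!false) = true from rfl, hN]; exact h2))
      i hi1 hia
    obtain ⟨hlS, hcT', hcF, hC4, hC5, hvm⟩ := Cb
    have hcT : (subword a i (enlarge a b P)).count true = b*n := hcT'
    refine ⟨hcT, hcF, ?_, ?_⟩
    · -- dominance
      intro p
      rcases le_or_gt p (2*(b*n)) with hp | hp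
      · have hct : ((subword a i (enlarge a b P)).take p).count true
            = ((List.range (b*n)).filter
              (fun j0 => j0 + hv false P ((i - 1 + j0*a)/b + 1) < p)).length := hC4 p hp
        have hlt : ((subword a i (enlarge a b P)).take p).length = p := by
          rw [List.length_take, hlS]; omega
        have hsum := count_tf ((subword a i (enlarge a b P)).take p)
        rw [hlt] at hsum
        have hspec0 := cnt_lt_spec (b*n) p
          (fun j0 => j0 + hv false P ((i - 1 + j0*a)/b + 1)) hvm
        have hcle := hspec0.1
        have hple0 := hspec0.2.1
        beta_reduce at hple0 hcle
        set cnt := ((List.range (b*n)).filter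
          (fun j0 => j0 + hv false P ((i - 1 + j0*a)/b + 1) < p)).length with hcnt
        rcases eq_or_lt_of_le hcle with hq | hq
        · omega
        · have hple2 : p ≤ cnt + hv false P ((i - 1 + cnt*a)/b + 1) := hple0 hq
          set x := i - 1 + cnt*a with hx
          set k := x/b + 1 with hk
          have hxle : x ≤ b*n*a - 1 := by
            have h2 : cnt*a ≤ (b*n-1)*a := Nat.mul_le_mul_right a (by omega)
            have h3 : (b*n)*a = (b*n-1)*a + a := by
              rw [← Nat.succ_mul]; congr 1; omega
            omega
          have hkan : k ≤ a*n := by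
            have h4 : x/b ≤ (b*n*a - 1)/b := Nat.div_le_div_right hxle
            have h5 : (b*n*a - 1)/b = n*a - 1 := by
              rw [show b*n*a = b*(n*a) from by ring, mul_sub_one_div b (n*a) hb
                (Nat.mul_pos hn ha)]
            have h6 : n*a = a*n := Nat.mul_comm _ _
            omega
          have hhab := habove_step a b P habove k (by rw [hk]; exact Nat.succ_le_succ (Nat.zero_le _)) (by rw [hN]; exact hkan)
          have e3 : b * (k - 1) = b*(x/b) := by rw [hk]; simp
          have e4 := Nat.div_add_mod x b
          have e5 : x % b < b := Nat.mod_lt _ hb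
          have e6 : (hv false P k)*a < (cnt+1)*a := by
            have e7 : a * hv false P k = hv false P k * a := Nat.mul_comm _ _
            have e9 : (cnt+1)*a = cnt*a + a := Nat.succ_mul _ _
            omega
          have e8 : hv false P k < cnt + 1 := Nat.lt_of_mul_lt_mul_right e6
          omega
      · have h1 : (subword a i (enlarge a b P)).take p = subword a i (enlarge a b P) :=
          List.take_of_length_le (by rw [hlS]; omega)
        rw [h1, hcF, hcT]
    · -- step values
      intro j hj1 hj2
      have h5 := (hC5 j hj1 hj2).2
      rw [stepVal_eq, h5, stepVal_eq]
      congr 1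
      have hcomm : a*(j-1) = (j-1)*a := Nat.mul_comm _ _
      have e1 : a*(j-1) + i + b - 1 = (i - 1 + (j-1)*a) + b := by omega
      rw [e1, Nat.add_div_right _ hb]
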